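/- Let H be a (finite-dimensional) Hilbert space and P, Q orthogonal projections on H. If ‖QP‖ = 1 then there exists f ≠ 0 with Pf = f and Qf = f. Consequently, if the only vector fixed by both P and Q is 0, then ‖QP‖ < 1. -/

import Mathlib

open ContinuousLinearMap in
private lemma proj_inner {H : Type} [NormedAddCommGroup H] [InnerProductSpace ℂ H]
    [FiniteDimensional ℂ H] (P : H →L[ℂ] H)
    (hP : P ∘L P = P) (hPa : ContinuousLinearMap.adjoint P = P) (f : H) :
    (inner ℂ (P f) (P f) : ℂ) = inner ℂ (P f) f := by
  have : (inner ℂ (P f) (P f) : ℂ) = inner ℂ (ContinuousLinearMap.adjoint P (P f)) f := by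
    rw [ContinuousLinearMap.adjoint_inner_left]
  rw [this, hPa]
  have : P (P f) = P f := by
    have := congrArg (fun T : H →L[ℂ] H => T f) hP
    simpa using this
  rw [this]

open ContinuousLinearMap in
private lemma proj_norm_le {H : Type} [NormedAddCommGroup H] [InnerProductSpace ℂ H]
    [FiniteDimensional ℂ H] (P : H →L[ℂ] H)
    (hP : P ∘L P = P) (hPa : ContinuousLinearMap.adjoint P = P) (f : H) :
    ‖P f‖ ≤ ‖f‖ := by
  have h := proj_inner P hP hPa f
  have h1 : ‖P f‖ ^ 2 = (inner ℂ (P f) (P f) : ℂ).re := by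
    rw [← RCLike.re_to_complex, inner_self_eq_norm_sq (𝕜 := ℂ)]
  have h2 : (inner ℂ (P f) f : ℂ).re ≤ ‖P f‖ * ‖f‖ := by
    calc (inner ℂ (P f) f : ℂ).re ≤ ‖(inner ℂ (P f) f : ℂ)‖ := Complex.re_le_norm _
      _ ≤ ‖P f‖ * ‖f‖ := norm_inner_le_norm _ _
  nlinarith [norm_nonneg (P f), norm_nonneg f, h ▸ h1]

open ContinuousLinearMap in
private lemma proj_fixed_of_norm_eq {H : Type} [NormedAddCommGroup H]
    [InnerProductSpace ℂ H] [FiniteDimensional ℂ H] (P : H →L[ℂ] H)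
    (hP : P ∘L P = P) (hPa : ContinuousLinearMap.adjoint P = P) (f : H)
    (hf : ‖P f‖ = ‖f‖) : P f = f := by
  have h := proj_inner P hP hPa f
  have key : ‖f - P f‖ ^ 2 = 0 := by
    have expand : ‖f - P f‖ ^ 2 = ‖f‖ ^ 2 - 2 * (inner ℂ f (P f) : ℂ).re + ‖P f‖ ^ 2 := by
      have := norm_sub_sq (𝕜 := ℂ) f (P f)
      simpa [sq] using this
    have hre : (inner ℂ f (P f) : ℂ).re = ‖P f‖ ^ 2 := by
      have : (inner ℂ f (P f) : ℂ) = starRingEnd ℂ (inner ℂ (P f) f) := by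
        rw [← inner_conj_symm]
      rw [this, ← h]
      rw [← RCLike.re_to_complex, RCLike.conj_re, inner_self_eq_norm_sq (𝕜 := ℂ)]
    rw [expand, hre, hf]; ring
  have : ‖f - P f‖ = 0 := by nlinarith [norm_nonneg (f - P f)]
  have := norm_eq_zero.mp this
  linear_combination (norm := abel) -this

/-- for orthogonal projections `P, Q` on a finite-dimensional complex
Hilbert space, `‖QP‖ = 1` implies a nonzero common fixed vector; hence if the only
common fixed vector is `0`, then `‖QP‖ < 1`. -/
theorem stmt11 {H : Type} [NormedAddCommGroup H] [InnerProductSpace ℂ H]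
    [FiniteDimensional ℂ H]
    (P Q : H →L[ℂ] H)
    (hP : P ∘L P = P) (hPa : ContinuousLinearMap.adjoint P = P)
    (hQ : Q ∘L Q = Q) (hQa : ContinuousLinearMap.adjoint Q = Q) :
    (‖Q ∘L P‖ = 1 → ∃ f : H, f ≠ 0 ∧ P f = f ∧ Q f = f) ∧
    ((∀ f : H, P f = f → Q f = f → f = 0) → ‖Q ∘L P‖ < 1) := by
  set T := Q ∘L P with hT
  have main : ‖T‖ = 1 → ∃ f : H, f ≠ 0 ∧ P f = f ∧ Q f = f := by
    intro hnorm
    -- T ≠ 0, so H is nontrivial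
    have hT0 : T ≠ 0 := by
      intro h
      rw [h, ContinuousLinearMap.opNorm_zero] at hnorm
      exact zero_ne_one hnorm
    obtain ⟨v, hv⟩ : ∃ v, T v ≠ 0 := by
      by_contra hc
      push_neg at hc
      exact hT0 (ContinuousLinearMap.ext fun x => by simpa using hc x)
    have hvne : v ≠ 0 := fun h => hv (by simp [h])
    have : Nontrivial H := nontrivial_of_ne v 0 hvne
    -- maximize ‖T x‖ on the unit sphere
    have hcomp : IsCompact (Metric.sphere (0 : H) 1) := isCompact_sphere _ _
    have hne : (Metric.sphere (0 : H) 1).Nonempty :=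
      NormedSpace.sphere_nonempty.mpr zero_le_one
    obtain ⟨x, hxs, hxmax⟩ := hcomp.exists_isMaxOn hne
      ((continuous_norm.comp T.continuous).continuousOn)
    have hx1 : ‖x‖ = 1 := by simpa using hxs
    -- ‖T x‖ = 1
    have hTx : ‖T x‖ = 1 := by
      have hle : ‖T x‖ ≤ 1 := by
        calc ‖T x‖ ≤ ‖T‖ * ‖x‖ := T.le_opNorm x
          _ = 1 := by rw [hnorm, hx1, mul_one]
      have hge : ‖T‖ ≤ ‖T x‖ := by
        apply ContinuousLinearMap.opNorm_le_bound _ (by positivity)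
        intro y
        rcases eq_or_ne y 0 with rfl | hy
        · simp
        · set c : ℂ := ((‖y‖ : ℂ))⁻¹ with hc
          have hy0 : (0:ℝ) < ‖y‖ := norm_pos_iff.mpr hy
          have hcn : ‖c‖ = ‖y‖⁻¹ := by
            rw [hc, norm_inv, Complex.norm_real, Real.norm_of_nonneg hy0.le]
          have hys : c • y ∈ Metric.sphere (0 : H) 1 := by
            simp [norm_smul, hcn, inv_mul_cancel₀ hy0.ne']
          have hb : ‖T (c • y)‖ ≤ ‖T x‖ := hxmax hys
          have h2 : ‖T (c • y)‖ = ‖y‖⁻¹ * ‖T y‖ := by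
            rw [map_smul, norm_smul, hcn]
          rw [h2] at hb
          calc ‖T y‖ = ‖y‖ * (‖y‖⁻¹ * ‖T y‖) := by field_simp
            _ ≤ ‖y‖ * ‖T x‖ := mul_le_mul_of_nonneg_left hb hy0.le
            _ = ‖T x‖ * ‖y‖ := mul_comm _ _
      linarith [hnorm ▸ hge]
    -- now ‖Q (P x)‖ = 1, and ‖P x‖ ≤ 1, ‖Q (P x)‖ ≤ ‖P x‖
    have hTapp : T x = Q (P x) := rfl
    have hPx : ‖P x‖ = 1 := by
      have h1 : ‖P x‖ ≤ 1 := hx1 ▸ proj_norm_le P hP hPa x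
      have h2 : ‖Q (P x)‖ ≤ ‖P x‖ := proj_norm_le Q hQ hQa (P x)
      rw [hTapp] at hTx
      linarith
    have hPfix : P x = x := proj_fixed_of_norm_eq P hP hPa x (by rw [hPx, hx1])
    have hQfix : Q (P x) = P x := proj_fixed_of_norm_eq Q hQ hQa (P x)
      (by rw [hTapp] at hTx; rw [hTx, hPx])
    refine ⟨x, fun h => by simp [h] at hx1, hPfix, ?_⟩
    rw [← hPfix]
    exact hQfix
  refine ⟨main, fun hzero => ?_⟩
  have hle : ‖T‖ ≤ 1 := by
    apply ContinuousLinearMap.opNorm_le_bound _ zero_le_one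
    intro y
    calc ‖T y‖ = ‖Q (P y)‖ := rfl
      _ ≤ ‖P y‖ := proj_norm_le Q hQ hQa (P y)
      _ ≤ ‖y‖ := proj_norm_le P hP hPa y
      _ = 1 * ‖y‖ := (one_mul _).symm
  rcases lt_or_eq_of_le hle with h | h
  · exact h
  · obtain ⟨f, hf, hPf, hQf⟩ := main h
    exact absurd (hzero f hPf hQf) hf
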